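/- The size multipartite Ramsey number m_4(4K_2, C_7) equals 3. That is, every 2-coloring of the edges of K_{4×3} contains a matching 4K_2 in the first color or a cycle C_7 in the second color, and there is a 2-coloring of the edges of K_{4×2} containing neither. -/

import Mathlib

open SimpleGraph

/-- The complete multipartite graph `K_{j x t}` with `j` parts, each of size `t`. -/
def multiK (j t : ℕ) : SimpleGraph (Fin j × Fin t) where
  Adj a b := a.1 ≠ b.1
  symm := ⟨fun _ _ h => Ne.symm h⟩
  loopless := ⟨fun _ h => h rfl⟩

/-- `G` contains a copy of `H`. -/
def Contains {α β : Type*} (G : SimpleGraph α) (H : SimpleGraph β) : Prop :=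
  ∃ f : β → α, Function.Injective f ∧ ∀ ⦃a b⦄, H.Adj a b → G.Adj (f a) (f b)

/-- The monochromatic subgraph of `G` in color `i` under the edge-coloring `c`. -/
def colorClass {α : Type*} {k : ℕ} (G : SimpleGraph α) (c : Sym2 α → Fin k) (i : Fin k) :
    SimpleGraph α where
  Adj a b := G.Adj a b ∧ c s(a, b) = i
  symm := ⟨fun _ _ h => ⟨h.1.symm, by rw [Sym2.eq_swap]; exact h.2⟩⟩
  loopless := ⟨fun a h => G.irrefl h.1⟩

/-- The stripe `nK₂`: the graph consisting of `n` pairwise disjoint edges. -/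
def stripe (n : ℕ) : SimpleGraph (Fin n × Fin 2) where
  Adj a b := a.1 = b.1 ∧ a.2 ≠ b.2
  symm := ⟨fun _ _ h => ⟨h.1.symm, h.2.symm⟩⟩
  loopless := ⟨fun _ h => h.2 rfl⟩

/-- Every 3-coloring of the edges of `K_{j x t}` yields a copy of `K_{1,2}` in color 0,
or of `P₄` in color 1, or of `nK₂` in color 2. -/
def Arrows3 (j t n : ℕ) : Prop :=
  ∀ c : Sym2 (Fin j × Fin t) → Fin 3,
    Contains (colorClass (multiK j t) c 0) (pathGraph 3) ∨
    Contains (colorClass (multiK j t) c 1) (pathGraph 4) ∨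
    Contains (colorClass (multiK j t) c 2) (stripe n)

/-- Every 2-coloring of the edges of `K_{j x t}` yields a copy of `nK₂` in color 0
or of `C₇` in color 1. -/
def ArrowsC7 (j t n : ℕ) : Prop :=
  ∀ c : Sym2 (Fin j × Fin t) → Fin 2,
    Contains (colorClass (multiK j t) c 0) (stripe n) ∨
    Contains (colorClass (multiK j t) c 1) (cycleGraph 7)

abbrev V := Fin 4 × Fin 3

lemma cycle7 {α : Type*} (G : SimpleGraph α) (v : Fin 7 → α) (hinj : Function.Injective v)
    (hadj : ∀ i : Fin 7, G.Adj (v i) (v (i+1))) : Contains G (cycleGraph 7) := by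
  refine ⟨v, hinj, ?_⟩
  intro a b hab
  rw [cycleGraph_adj'] at hab
  rcases hab with h | h
  · have : a = b + 1 := by
      have := sub_eq_iff_eq_add.mp (Fin.ext h : a - b = 1)
      rw [this, add_comm]
    rw [this]
    exact (hadj b).symm
  · have : b = a + 1 := by
      have := sub_eq_iff_eq_add.mp (Fin.ext h : b - a = 1)
      rw [this, add_comm]
    rw [this]
    exact hadj a

lemma ne_of_parts {u v : V} {p q : Fin 4} (hu : u.1 = p) (hv : v.1 = q) (h : p ≠ q) : u ≠ v :=
  fun e => h (hu ▸ hv ▸ e ▸ rfl)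

lemma ne_of_parts' {u v : V} (h : u.1 ≠ v.1) : u ≠ v := fun e => h (e ▸ rfl)

lemma cycle7' {G : SimpleGraph V} (v0 v1 v2 v3 v4 v5 v6 : V)
    (h01 : G.Adj v0 v1) (h12 : G.Adj v1 v2) (h23 : G.Adj v2 v3) (h34 : G.Adj v3 v4)
    (h45 : G.Adj v4 v5) (h56 : G.Adj v5 v6) (h60 : G.Adj v6 v0)
    (hnd : ([v0,v1,v2,v3,v4,v5,v6] : List V).Nodup) : Contains G (cycleGraph 7) := by
  simp only [List.nodup_cons, List.mem_cons, List.not_mem_nil, List.mem_singleton, or_false,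
    not_or, List.nodup_nil, and_true] at hnd
  obtain ⟨⟨n01,n02,n03,n04,n05,n06⟩,⟨n12,n13,n14,n15,n16⟩,⟨n23,n24,n25,n26⟩,⟨n34,n35,n36⟩,⟨n45,n46⟩,n56⟩ := hnd
  apply cycle7 G (fun i => match i with
    | 0 => v0 | 1 => v1 | 2 => v2 | 3 => v3 | 4 => v4 | 5 => v5 | 6 => v6)
  · intro a b hab
    fin_cases a <;> fin_cases b <;> simp_all
  · intro i
    fin_cases i
    · exact h01
    · exact h12
    · exact h23
    · exact h34
    · exact h45
    · exact h56
    · exact h60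

lemma univfilter : ∀ j : Fin 4, (Finset.univ.filter (fun x : V => x.1 = j)).card = 3 := by decide

lemma partfull {S : Finset V} {j : Fin 4} {y : V}
    (h3 : (S.filter (fun x => x.1 = j)).card = 3) (hy : y ∉ S) : y.1 ≠ j := by
  intro h
  have hsub : S.filter (fun x => x.1 = j) ⊆ Finset.univ.filter (fun x : V => x.1 = j) :=
    Finset.filter_subset_filter _ (Finset.subset_univ S)
  have heq := Finset.eq_of_subset_of_card_le hsub (le_of_eq ((univfilter j).trans h3.symm))
  have hm : y ∈ Finset.univ.filter (fun x : V => x.1 = j) :=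
    Finset.mem_filter.mpr ⟨Finset.mem_univ y, h⟩
  rw [← heq] at hm
  exact hy (Finset.mem_filter.mp hm).1

lemma extract3 {S : Finset V} {p : Fin 4} (h3 : (S.filter (fun x => x.1 = p)).card = 3) (w : V) :
    ∃ a b c : V, a ≠ b ∧ a ≠ c ∧ b ≠ c ∧ a ≠ w ∧ b ≠ w ∧
      (a ∈ S ∧ a.1 = p) ∧ (b ∈ S ∧ b.1 = p) ∧ (c ∈ S ∧ c.1 = p) := by
  obtain ⟨a, b, c, hab, hac, hbc, heq⟩ := Finset.card_eq_three.mp h3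
  have ha := Finset.mem_filter.mp (heq ▸ (by simp : a ∈ ({a,b,c} : Finset V)))
  have hb := Finset.mem_filter.mp (heq ▸ (by simp : b ∈ ({a,b,c} : Finset V)))
  have hc := Finset.mem_filter.mp (heq ▸ (by simp : c ∈ ({a,b,c} : Finset V)))
  rcases eq_or_ne a w with rfl | haw
  · exact ⟨b, c, a, hbc, Ne.symm hab, Ne.symm hac, Ne.symm hab, Ne.symm hac, hb, hc, ha⟩
  · rcases eq_or_ne b w with rfl | hbw
    · exact ⟨a, c, b, hac, hab, Ne.symm hbc, haw, Ne.symm hbc, ha, hc, hb⟩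
    · exact ⟨a, b, c, hab, hac, hbc, haw, hbw, ha, hb, hc⟩

lemma extract2 {S : Finset V} {p : Fin 4} (h2 : (S.filter (fun x => x.1 = p)).card = 2) (w : V) :
    ∃ a b : V, a ≠ b ∧ a ≠ w ∧ (a ∈ S ∧ a.1 = p) ∧ (b ∈ S ∧ b.1 = p) := by
  obtain ⟨a, b, hab, heq⟩ := Finset.card_eq_two.mp h2
  have ha := Finset.mem_filter.mp (heq ▸ (by simp : a ∈ ({a,b} : Finset V)))
  have hb := Finset.mem_filter.mp (heq ▸ (by simp : b ∈ ({a,b} : Finset V)))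
  rcases eq_or_ne a w with rfl | haw
  · exact ⟨b, a, Ne.symm hab, Ne.symm hab, hb, ha⟩
  · exact ⟨a, b, hab, haw, ha, hb⟩

lemma extract1 {S : Finset V} {p : Fin 4} (h1 : (S.filter (fun x => x.1 = p)).card = 1) :
    ∃ a : V, a ∈ S ∧ a.1 = p := by
  obtain ⟨a, heq⟩ := Finset.card_eq_one.mp h1
  exact ⟨a, Finset.mem_filter.mp (heq ▸ (by simp : a ∈ ({a} : Finset V)))⟩

section Cases
variable {G : SimpleGraph V} {S : Finset V} {y w : V}

lemma case33 (hy : y ∉ S)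
    (hblue : ∀ u ∈ S, ∀ v ∈ S, u.1 ≠ v.1 → G.Adj u v)
    (hy' : ∀ u ∈ S, u.1 ≠ y.1 → u ≠ w → G.Adj u y)
    (pa pb : Fin 4) (hpab : pa ≠ pb)
    (h3a : (S.filter (fun x => x.1 = pa)).card = 3)
    (h3b : (S.filter (fun x => x.1 = pb)).card = 3) : Contains G (cycleGraph 7) := by
  have hyne : ∀ u, u ∈ S → y ≠ u := fun u hu h => hy (h ▸ hu)
  have hya := partfull h3a hy
  have hyb := partfull h3b hy
  obtain ⟨a1,a2,a3, ha12,ha13,ha23, ha1w, -, ⟨ha1S,ha1⟩,⟨ha2S,ha2⟩,⟨ha3S,ha3⟩⟩ := extract3 h3a w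
  obtain ⟨b3,b1,b2, hb31,hb32,hb12, hb3w, -, ⟨hb3S,hb3⟩,⟨hb1S,hb1⟩,⟨hb2S,hb2⟩⟩ := extract3 h3b w
  apply cycle7' y a1 b1 a2 b2 a3 b3
  · exact (hy' a1 ha1S (by rw [ha1]; exact Ne.symm hya) ha1w).symm
  · exact hblue a1 ha1S b1 hb1S (by rw [ha1, hb1]; exact hpab)
  · exact hblue b1 hb1S a2 ha2S (by rw [hb1, ha2]; exact Ne.symm hpab)
  · exact hblue a2 ha2S b2 hb2S (by rw [ha2, hb2]; exact hpab)
  · exact hblue b2 hb2S a3 ha3S (by rw [hb2, ha3]; exact Ne.symm hpab)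
  · exact hblue a3 ha3S b3 hb3S (by rw [ha3, hb3]; exact hpab)
  · exact hy' b3 hb3S (by rw [hb3]; exact Ne.symm hyb) hb3w
  · simp only [List.nodup_cons, List.mem_cons, List.not_mem_nil, List.mem_singleton, or_false,
      not_or, List.nodup_nil, and_true]
    exact ⟨⟨hyne _ ha1S, hyne _ hb1S, hyne _ ha2S, hyne _ hb2S, hyne _ ha3S, hyne _ hb3S⟩,
      ⟨ne_of_parts ha1 hb1 hpab, ha12, ne_of_parts ha1 hb2 hpab, ha13, ne_of_parts ha1 hb3 hpab⟩,
      ⟨ne_of_parts hb1 ha2 (Ne.symm hpab), hb12, ne_of_parts hb1 ha3 (Ne.symm hpab), Ne.symm hb31⟩,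
      ⟨ne_of_parts ha2 hb2 hpab, ha23, ne_of_parts ha2 hb3 hpab⟩,
      ⟨ne_of_parts hb2 ha3 (Ne.symm hpab), Ne.symm hb32⟩,
      ne_of_parts ha3 hb3 hpab, not_false⟩

lemma case3X (hy : y ∉ S)
    (hblue : ∀ u ∈ S, ∀ v ∈ S, u.1 ≠ v.1 → G.Adj u v)
    (hy' : ∀ u ∈ S, u.1 ≠ y.1 → u ≠ w → G.Adj u y)
    (pa : Fin 4)
    (h3a : (S.filter (fun x => x.1 = pa)).card = 3)
    (t1 t2 t3 : V) (ht1S : t1 ∈ S) (ht2S : t2 ∈ S) (ht3S : t3 ∈ S)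
    (ht12 : t1 ≠ t2) (ht13 : t1 ≠ t3)
    (ht1p : t1.1 ≠ pa) (ht2p : t2.1 ≠ pa) (ht3p : t3.1 ≠ pa)
    (ht23 : t2.1 ≠ t3.1) : Contains G (cycleGraph 7) := by
  have hyne : ∀ u, u ∈ S → y ≠ u := fun u hu h => hy (h ▸ hu)
  have hya := partfull h3a hy
  obtain ⟨a1,a2,a3, ha12,ha13,ha23, ha1w, ha2w, ⟨ha1S,ha1⟩,⟨ha2S,ha2⟩,⟨ha3S,ha3⟩⟩ := extract3 h3a w
  apply cycle7' a1 y a2 t1 a3 t2 t3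
  · exact hy' a1 ha1S (by rw [ha1]; exact Ne.symm hya) ha1w
  · exact (hy' a2 ha2S (by rw [ha2]; exact Ne.symm hya) ha2w).symm
  · exact hblue a2 ha2S t1 ht1S (by rw [ha2]; exact Ne.symm ht1p)
  · exact hblue t1 ht1S a3 ha3S (by rw [ha3]; exact ht1p)
  · exact hblue a3 ha3S t2 ht2S (by rw [ha3]; exact Ne.symm ht2p)
  · exact hblue t2 ht2S t3 ht3S ht23
  · exact hblue t3 ht3S a1 ha1S (by rw [ha1]; exact ht3p)
  · simp only [List.nodup_cons, List.mem_cons, List.not_mem_nil, List.mem_singleton, or_false,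
      not_or, List.nodup_nil, and_true]
    exact ⟨⟨Ne.symm (hyne _ ha1S), ha12, ne_of_parts' (by rw [ha1]; exact Ne.symm ht1p), ha13,
        ne_of_parts' (by rw [ha1]; exact Ne.symm ht2p), ne_of_parts' (by rw [ha1]; exact Ne.symm ht3p)⟩,
      ⟨hyne _ ha2S, hyne _ ht1S, hyne _ ha3S, hyne _ ht2S, hyne _ ht3S⟩,
      ⟨ne_of_parts' (by rw [ha2]; exact Ne.symm ht1p), ha23, ne_of_parts' (by rw [ha2]; exact Ne.symm ht2p),
        ne_of_parts' (by rw [ha2]; exact Ne.symm ht3p)⟩,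
      ⟨ne_of_parts' (by rw [ha3]; exact ht1p), ht12, ht13⟩,
      ⟨ne_of_parts' (by rw [ha3]; exact Ne.symm ht2p), ne_of_parts' (by rw [ha3]; exact Ne.symm ht3p)⟩,
      ne_of_parts' ht23, not_false⟩

lemma case321 (hy : y ∉ S)
    (hblue : ∀ u ∈ S, ∀ v ∈ S, u.1 ≠ v.1 → G.Adj u v)
    (hy' : ∀ u ∈ S, u.1 ≠ y.1 → u ≠ w → G.Adj u y)
    (pa pb pc : Fin 4) (hab : pa ≠ pb) (hac : pa ≠ pc) (hbc : pb ≠ pc)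
    (h3a : (S.filter (fun x => x.1 = pa)).card = 3)
    (h2b : (S.filter (fun x => x.1 = pb)).card = 2)
    (h1c : (S.filter (fun x => x.1 = pc)).card = 1) : Contains G (cycleGraph 7) := by
  obtain ⟨b1,b2, hb12, -, ⟨hb1S,hb1⟩,⟨hb2S,hb2⟩⟩ := extract2 h2b w
  obtain ⟨c, hcS, hc⟩ := extract1 h1c
  exact case3X hy hblue hy' pa h3a b1 b2 c hb1S hb2S hcS hb12
    (ne_of_parts hb1 hc hbc)
    (by rw [hb1]; exact Ne.symm hab) (by rw [hb2]; exact Ne.symm hab)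
    (by rw [hc]; exact Ne.symm hac) (by rw [hb2, hc]; exact hbc)

lemma case3111 (hy : y ∉ S)
    (hblue : ∀ u ∈ S, ∀ v ∈ S, u.1 ≠ v.1 → G.Adj u v)
    (hy' : ∀ u ∈ S, u.1 ≠ y.1 → u ≠ w → G.Adj u y)
    (pa pb pc pd : Fin 4) (hab : pa ≠ pb) (hac : pa ≠ pc) (had : pa ≠ pd)
    (hbc : pb ≠ pc) (hbd : pb ≠ pd) (hcd : pc ≠ pd)
    (h3a : (S.filter (fun x => x.1 = pa)).card = 3)
    (h1b : (S.filter (fun x => x.1 = pb)).card = 1)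
    (h1c : (S.filter (fun x => x.1 = pc)).card = 1)
    (h1d : (S.filter (fun x => x.1 = pd)).card = 1) : Contains G (cycleGraph 7) := by
  obtain ⟨b, hbS, hb⟩ := extract1 h1b
  obtain ⟨c, hcS, hc⟩ := extract1 h1c
  obtain ⟨d, hdS, hd⟩ := extract1 h1d
  exact case3X hy hblue hy' pa h3a b c d hbS hcS hdS
    (ne_of_parts hb hc hbc) (ne_of_parts hb hd hbd)
    (by rw [hb]; exact Ne.symm hab) (by rw [hc]; exact Ne.symm hac)
    (by rw [hd]; exact Ne.symm had) (by rw [hc, hd]; exact hcd)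

lemma case222 (hy : y ∉ S)
    (hblue : ∀ u ∈ S, ∀ v ∈ S, u.1 ≠ v.1 → G.Adj u v)
    (hy' : ∀ u ∈ S, u.1 ≠ y.1 → u ≠ w → G.Adj u y)
    (pa pb pc : Fin 4) (hab : pa ≠ pb) (hac : pa ≠ pc) (hbc : pb ≠ pc)
    (h2a : (S.filter (fun x => x.1 = pa)).card = 2)
    (h2b : (S.filter (fun x => x.1 = pb)).card = 2)
    (h2c : (S.filter (fun x => x.1 = pc)).card = 2)
    (hyB : y.1 ≠ pb) (hyC : y.1 ≠ pc) : Contains G (cycleGraph 7) := by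
  have hyne : ∀ u, u ∈ S → y ≠ u := fun u hu h => hy (h ▸ hu)
  obtain ⟨a1,a2, ha12, -, ⟨ha1S,ha1⟩,⟨ha2S,ha2⟩⟩ := extract2 h2a w
  obtain ⟨b1,b2, hb12, hb1w, ⟨hb1S,hb1⟩,⟨hb2S,hb2⟩⟩ := extract2 h2b w
  obtain ⟨c2,c1, hc21, hc2w, ⟨hc2S,hc2⟩,⟨hc1S,hc1⟩⟩ := extract2 h2c w
  apply cycle7' y b1 a1 b2 c1 a2 c2
  · exact (hy' b1 hb1S (by rw [hb1]; exact Ne.symm hyB) hb1w).symm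
  · exact hblue b1 hb1S a1 ha1S (by rw [hb1, ha1]; exact Ne.symm hab)
  · exact hblue a1 ha1S b2 hb2S (by rw [ha1, hb2]; exact hab)
  · exact hblue b2 hb2S c1 hc1S (by rw [hb2, hc1]; exact hbc)
  · exact hblue c1 hc1S a2 ha2S (by rw [hc1, ha2]; exact Ne.symm hac)
  · exact hblue a2 ha2S c2 hc2S (by rw [ha2, hc2]; exact hac)
  · exact hy' c2 hc2S (by rw [hc2]; exact Ne.symm hyC) hc2w
  · simp only [List.nodup_cons, List.mem_cons, List.not_mem_nil, List.mem_singleton, or_false,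
      not_or, List.nodup_nil, and_true]
    exact ⟨⟨hyne _ hb1S, hyne _ ha1S, hyne _ hb2S, hyne _ hc1S, hyne _ ha2S, hyne _ hc2S⟩,
      ⟨ne_of_parts hb1 ha1 (Ne.symm hab), hb12, ne_of_parts hb1 hc1 hbc,
        ne_of_parts hb1 ha2 (Ne.symm hab), ne_of_parts hb1 hc2 hbc⟩,
      ⟨ne_of_parts ha1 hb2 hab, ne_of_parts ha1 hc1 hac, ha12, ne_of_parts ha1 hc2 hac⟩,
      ⟨ne_of_parts hb2 hc1 hbc, ne_of_parts hb2 ha2 (Ne.symm hab), ne_of_parts hb2 hc2 hbc⟩,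
      ⟨ne_of_parts hc1 ha2 (Ne.symm hac), Ne.symm hc21⟩,
      ne_of_parts ha2 hc2 hac, not_false⟩

lemma case2211 (hy : y ∉ S)
    (hblue : ∀ u ∈ S, ∀ v ∈ S, u.1 ≠ v.1 → G.Adj u v)
    (hy' : ∀ u ∈ S, u.1 ≠ y.1 → u ≠ w → G.Adj u y)
    (pa pb pc pd : Fin 4) (hab : pa ≠ pb) (hac : pa ≠ pc) (had : pa ≠ pd)
    (hbc : pb ≠ pc) (hbd : pb ≠ pd) (hcd : pc ≠ pd)
    (h2a : (S.filter (fun x => x.1 = pa)).card = 2)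
    (h2b : (S.filter (fun x => x.1 = pb)).card = 2)
    (h1c : (S.filter (fun x => x.1 = pc)).card = 1)
    (h1d : (S.filter (fun x => x.1 = pd)).card = 1)
    (hyB : y.1 ≠ pb) : Contains G (cycleGraph 7) := by
  have hyne : ∀ u, u ∈ S → y ≠ u := fun u hu h => hy (h ▸ hu)
  obtain ⟨a1,a2, ha12, -, ⟨ha1S,ha1⟩,⟨ha2S,ha2⟩⟩ := extract2 h2a w
  obtain ⟨b1,b2, hb12, hb1w, ⟨hb1S,hb1⟩,⟨hb2S,hb2⟩⟩ := extract2 h2b w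
  obtain ⟨c, hcS, hc⟩ := extract1 h1c
  obtain ⟨d, hdS, hd⟩ := extract1 h1d
  by_cases hwd : w = d
  · -- pattern [y, b1, a1, d, a2, c, b2]
    apply cycle7' y b1 a1 d a2 c b2
    · exact (hy' b1 hb1S (by rw [hb1]; exact Ne.symm hyB) hb1w).symm
    · exact hblue b1 hb1S a1 ha1S (by rw [hb1, ha1]; exact Ne.symm hab)
    · exact hblue a1 ha1S d hdS (by rw [ha1, hd]; exact had)
    · exact hblue d hdS a2 ha2S (by rw [hd, ha2]; exact Ne.symm had)
    · exact hblue a2 ha2S c hcS (by rw [ha2, hc]; exact hac)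
    · exact hblue c hcS b2 hb2S (by rw [hc, hb2]; exact Ne.symm hbc)
    · exact hy' b2 hb2S (by rw [hb2]; exact Ne.symm hyB)
        (by rw [hwd]; exact ne_of_parts hb2 hd hbd)
    · simp only [List.nodup_cons, List.mem_cons, List.not_mem_nil, List.mem_singleton, or_false,
        not_or, List.nodup_nil, and_true]
      exact ⟨⟨hyne _ hb1S, hyne _ ha1S, hyne _ hdS, hyne _ ha2S, hyne _ hcS, hyne _ hb2S⟩,
        ⟨ne_of_parts hb1 ha1 (Ne.symm hab), ne_of_parts hb1 hd hbd,
          ne_of_parts hb1 ha2 (Ne.symm hab), ne_of_parts hb1 hc hbc, hb12⟩,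
        ⟨ne_of_parts ha1 hd had, ha12, ne_of_parts ha1 hc hac, ne_of_parts ha1 hb2 hab⟩,
        ⟨ne_of_parts hd ha2 (Ne.symm had), ne_of_parts hd hc (Ne.symm hcd),
          ne_of_parts hd hb2 (Ne.symm hbd)⟩,
        ⟨ne_of_parts ha2 hc hac, ne_of_parts ha2 hb2 hab⟩,
        ne_of_parts hc hb2 (Ne.symm hbc), not_false⟩
  · by_cases hyd : y.1 = pd
    · by_cases hwc : w = c
      · -- pattern [y, b1, a1, c, a2, d, b2]
        apply cycle7' y b1 a1 c a2 d b2
        · exact (hy' b1 hb1S (by rw [hb1]; exact Ne.symm hyB) hb1w).symm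
        · exact hblue b1 hb1S a1 ha1S (by rw [hb1, ha1]; exact Ne.symm hab)
        · exact hblue a1 ha1S c hcS (by rw [ha1, hc]; exact hac)
        · exact hblue c hcS a2 ha2S (by rw [hc, ha2]; exact Ne.symm hac)
        · exact hblue a2 ha2S d hdS (by rw [ha2, hd]; exact had)
        · exact hblue d hdS b2 hb2S (by rw [hd, hb2]; exact Ne.symm hbd)
        · exact hy' b2 hb2S (by rw [hb2]; exact Ne.symm hyB)
            (by rw [hwc]; exact ne_of_parts hb2 hc hbc)
        · simp only [List.nodup_cons, List.mem_cons, List.not_mem_nil, List.mem_singleton,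
            or_false, not_or, List.nodup_nil, and_true]
          exact ⟨⟨hyne _ hb1S, hyne _ ha1S, hyne _ hcS, hyne _ ha2S, hyne _ hdS, hyne _ hb2S⟩,
            ⟨ne_of_parts hb1 ha1 (Ne.symm hab), ne_of_parts hb1 hc hbc,
              ne_of_parts hb1 ha2 (Ne.symm hab), ne_of_parts hb1 hd hbd, hb12⟩,
            ⟨ne_of_parts ha1 hc hac, ha12, ne_of_parts ha1 hd had, ne_of_parts ha1 hb2 hab⟩,
            ⟨ne_of_parts hc ha2 (Ne.symm hac), ne_of_parts hc hd hcd,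
              ne_of_parts hc hb2 (Ne.symm hbc)⟩,
            ⟨ne_of_parts ha2 hd had, ne_of_parts ha2 hb2 hab⟩,
            ne_of_parts hd hb2 (Ne.symm hbd), not_false⟩
      · -- pattern [y, b1, a1, b2, a2, d, c]
        apply cycle7' y b1 a1 b2 a2 d c
        · exact (hy' b1 hb1S (by rw [hb1]; exact Ne.symm hyB) hb1w).symm
        · exact hblue b1 hb1S a1 ha1S (by rw [hb1, ha1]; exact Ne.symm hab)
        · exact hblue a1 ha1S b2 hb2S (by rw [ha1, hb2]; exact hab)
        · exact hblue b2 hb2S a2 ha2S (by rw [hb2, ha2]; exact Ne.symm hab)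
        · exact hblue a2 ha2S d hdS (by rw [ha2, hd]; exact had)
        · exact hblue d hdS c hcS (by rw [hd, hc]; exact Ne.symm hcd)
        · exact hy' c hcS (by rw [hc, hyd]; exact hcd) (fun h => hwc h.symm)
        · simp only [List.nodup_cons, List.mem_cons, List.not_mem_nil, List.mem_singleton,
            or_false, not_or, List.nodup_nil, and_true]
          exact ⟨⟨hyne _ hb1S, hyne _ ha1S, hyne _ hb2S, hyne _ ha2S, hyne _ hdS, hyne _ hcS⟩,
            ⟨ne_of_parts hb1 ha1 (Ne.symm hab), hb12, ne_of_parts hb1 ha2 (Ne.symm hab),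
              ne_of_parts hb1 hd hbd, ne_of_parts hb1 hc hbc⟩,
            ⟨ne_of_parts ha1 hb2 hab, ha12, ne_of_parts ha1 hd had, ne_of_parts ha1 hc hac⟩,
            ⟨ne_of_parts hb2 ha2 (Ne.symm hab), ne_of_parts hb2 hd hbd, ne_of_parts hb2 hc hbc⟩,
            ⟨ne_of_parts ha2 hd had, ne_of_parts ha2 hc hac⟩,
            ne_of_parts hd hc (Ne.symm hcd), not_false⟩
    · -- pattern [y, b1, a1, b2, a2, c, d]
      apply cycle7' y b1 a1 b2 a2 c d
      · exact (hy' b1 hb1S (by rw [hb1]; exact Ne.symm hyB) hb1w).symm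
      · exact hblue b1 hb1S a1 ha1S (by rw [hb1, ha1]; exact Ne.symm hab)
      · exact hblue a1 ha1S b2 hb2S (by rw [ha1, hb2]; exact hab)
      · exact hblue b2 hb2S a2 ha2S (by rw [hb2, ha2]; exact Ne.symm hab)
      · exact hblue a2 ha2S c hcS (by rw [ha2, hc]; exact hac)
      · exact hblue c hcS d hdS (by rw [hc, hd]; exact hcd)
      · exact hy' d hdS (by rw [hd]; exact fun h => hyd h.symm) (fun h => hwd h.symm)
      · simp only [List.nodup_cons, List.mem_cons, List.not_mem_nil, List.mem_singleton,
          or_false, not_or, List.nodup_nil, and_true]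
        exact ⟨⟨hyne _ hb1S, hyne _ ha1S, hyne _ hb2S, hyne _ ha2S, hyne _ hcS, hyne _ hdS⟩,
          ⟨ne_of_parts hb1 ha1 (Ne.symm hab), hb12, ne_of_parts hb1 ha2 (Ne.symm hab),
            ne_of_parts hb1 hc hbc, ne_of_parts hb1 hd hbd⟩,
          ⟨ne_of_parts ha1 hb2 hab, ha12, ne_of_parts ha1 hc hac, ne_of_parts ha1 hd had⟩,
          ⟨ne_of_parts hb2 ha2 (Ne.symm hab), ne_of_parts hb2 hc hbc, ne_of_parts hb2 hd hbd⟩,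
          ⟨ne_of_parts ha2 hc hac, ne_of_parts ha2 hd had⟩,
          ne_of_parts hc hd hcd, not_false⟩

lemma case222' (hy : y ∉ S)
    (hblue : ∀ u ∈ S, ∀ v ∈ S, u.1 ≠ v.1 → G.Adj u v)
    (hy' : ∀ u ∈ S, u.1 ≠ y.1 → u ≠ w → G.Adj u y)
    (pa pb pc : Fin 4) (hab : pa ≠ pb) (hac : pa ≠ pc) (hbc : pb ≠ pc)
    (h2a : (S.filter (fun x => x.1 = pa)).card = 2)
    (h2b : (S.filter (fun x => x.1 = pb)).card = 2)
    (h2c : (S.filter (fun x => x.1 = pc)).card = 2) : Contains G (cycleGraph 7) := by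
  by_cases h1 : y.1 = pa
  · exact case222 hy hblue hy' pa pb pc hab hac hbc h2a h2b h2c
      (by rw [h1]; exact hab) (by rw [h1]; exact hac)
  · by_cases h2 : y.1 = pb
    · exact case222 hy hblue hy' pb pa pc (Ne.symm hab) hbc hac h2b h2a h2c
        (by rw [h2]; exact Ne.symm hab) (by rw [h2]; exact hbc)
    · by_cases h3 : y.1 = pc
      · exact case222 hy hblue hy' pc pa pb (Ne.symm hac) (Ne.symm hbc) hab h2c h2a h2b
          (by rw [h3]; exact Ne.symm hac) (by rw [h3]; exact Ne.symm hbc)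
      · exact case222 hy hblue hy' pa pb pc hab hac hbc h2a h2b h2c h2 h3

lemma case2211' (hy : y ∉ S)
    (hblue : ∀ u ∈ S, ∀ v ∈ S, u.1 ≠ v.1 → G.Adj u v)
    (hy' : ∀ u ∈ S, u.1 ≠ y.1 → u ≠ w → G.Adj u y)
    (pa pb pc pd : Fin 4) (hab : pa ≠ pb) (hac : pa ≠ pc) (had : pa ≠ pd)
    (hbc : pb ≠ pc) (hbd : pb ≠ pd) (hcd : pc ≠ pd)
    (h2a : (S.filter (fun x => x.1 = pa)).card = 2)
    (h2b : (S.filter (fun x => x.1 = pb)).card = 2)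
    (h1c : (S.filter (fun x => x.1 = pc)).card = 1)
    (h1d : (S.filter (fun x => x.1 = pd)).card = 1) : Contains G (cycleGraph 7) := by
  by_cases hb' : y.1 = pb
  · exact case2211 hy hblue hy' pb pa pc pd (Ne.symm hab) hbc hbd hac had hcd h2b h2a h1c h1d
      (by rw [hb']; exact Ne.symm hab)
  · exact case2211 hy hblue hy' pa pb pc pd hab hac had hbc hbd hcd h2a h2b h1c h1d hb'

lemma core (hy : y ∉ S) (hScard : S.card = 6)
    (hblue : ∀ u ∈ S, ∀ v ∈ S, u.1 ≠ v.1 → G.Adj u v)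
    (hy' : ∀ u ∈ S, u.1 ≠ y.1 → u ≠ w → G.Adj u y) : Contains G (cycleGraph 7) := by
  have hsum : (S.filter (fun x => x.1 = (0:Fin 4))).card + (S.filter (fun x => x.1 = (1:Fin 4))).card
      + (S.filter (fun x => x.1 = (2:Fin 4))).card + (S.filter (fun x => x.1 = (3:Fin 4))).card = 6 := by
    have h := Finset.card_eq_sum_card_fiberwise
      (f := Prod.fst) (s := S) (t := (Finset.univ : Finset (Fin 4))) (fun x _ => Finset.mem_univ _)
    rw [hScard, Fin.sum_univ_four] at h
    exact h.symm
  have hle : ∀ j : Fin 4, (S.filter (fun x => x.1 = j)).card ≤ 3 := fun j =>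
    le_trans (Finset.card_le_card (Finset.filter_subset_filter _ (Finset.subset_univ S)))
      (le_of_eq (univfilter j))
  obtain ⟨k0, hk0⟩ : ∃ k, (S.filter (fun x => x.1 = (0:Fin 4))).card = k := ⟨_, rfl⟩
  obtain ⟨k1, hk1⟩ : ∃ k, (S.filter (fun x => x.1 = (1:Fin 4))).card = k := ⟨_, rfl⟩
  obtain ⟨k2, hk2⟩ : ∃ k, (S.filter (fun x => x.1 = (2:Fin 4))).card = k := ⟨_, rfl⟩
  obtain ⟨k3, hk3⟩ : ∃ k, (S.filter (fun x => x.1 = (3:Fin 4))).card = k := ⟨_, rfl⟩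
  have b0 : k0 ≤ 3 := hk0 ▸ hle 0
  have b1 : k1 ≤ 3 := hk1 ▸ hle 1
  have b2 : k2 ≤ 3 := hk2 ▸ hle 2
  have b3 : k3 ≤ 3 := hk3 ▸ hle 3
  rw [hk0, hk1, hk2, hk3] at hsum
  interval_cases k0 <;> interval_cases k1 <;> interval_cases k2 <;> interval_cases k3 <;>
    try omega
  · exact case33 hy hblue hy' 2 3 (by decide) hk2 hk3
  · exact case321 hy hblue hy' 3 2 1 (by decide) (by decide) (by decide) hk3 hk2 hk1
  · exact case321 hy hblue hy' 2 3 1 (by decide) (by decide) (by decide) hk2 hk3 hk1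
  · exact case321 hy hblue hy' 3 1 2 (by decide) (by decide) (by decide) hk3 hk1 hk2
  · exact case222' hy hblue hy' 1 2 3 (by decide) (by decide) (by decide) hk1 hk2 hk3
  · exact case321 hy hblue hy' 2 1 3 (by decide) (by decide) (by decide) hk2 hk1 hk3
  · exact case33 hy hblue hy' 1 3 (by decide) hk1 hk3
  · exact case321 hy hblue hy' 1 3 2 (by decide) (by decide) (by decide) hk1 hk3 hk2
  · exact case321 hy hblue hy' 1 2 3 (by decide) (by decide) (by decide) hk1 hk2 hk3
  · exact case33 hy hblue hy' 1 2 (by decide) hk1 hk2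
  · exact case321 hy hblue hy' 3 2 0 (by decide) (by decide) (by decide) hk3 hk2 hk0
  · exact case321 hy hblue hy' 2 3 0 (by decide) (by decide) (by decide) hk2 hk3 hk0
  · exact case3111 hy hblue hy' 3 0 1 2 (by decide) (by decide) (by decide) (by decide)
      (by decide) (by decide) hk3 hk0 hk1 hk2
  · exact case2211' hy hblue hy' 2 3 0 1 (by decide) (by decide) (by decide) (by decide)
      (by decide) (by decide) hk2 hk3 hk0 hk1
  · exact case3111 hy hblue hy' 2 0 1 3 (by decide) (by decide) (by decide) (by decide)
      (by decide) (by decide) hk2 hk0 hk1 hk3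
  · exact case321 hy hblue hy' 3 1 0 (by decide) (by decide) (by decide) hk3 hk1 hk0
  · exact case2211' hy hblue hy' 1 3 0 2 (by decide) (by decide) (by decide) (by decide)
      (by decide) (by decide) hk1 hk3 hk0 hk2
  · exact case2211' hy hblue hy' 1 2 0 3 (by decide) (by decide) (by decide) (by decide)
      (by decide) (by decide) hk1 hk2 hk0 hk3
  · exact case321 hy hblue hy' 2 1 0 (by decide) (by decide) (by decide) hk2 hk1 hk0
  · exact case321 hy hblue hy' 1 3 0 (by decide) (by decide) (by decide) hk1 hk3 hk0
  · exact case3111 hy hblue hy' 1 0 2 3 (by decide) (by decide) (by decide) (by decide)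
      (by decide) (by decide) hk1 hk0 hk2 hk3
  · exact case321 hy hblue hy' 1 2 0 (by decide) (by decide) (by decide) hk1 hk2 hk0
  · exact case321 hy hblue hy' 3 0 2 (by decide) (by decide) (by decide) hk3 hk0 hk2
  · exact case222' hy hblue hy' 0 2 3 (by decide) (by decide) (by decide) hk0 hk2 hk3
  · exact case321 hy hblue hy' 2 0 3 (by decide) (by decide) (by decide) hk2 hk0 hk3
  · exact case321 hy hblue hy' 3 0 1 (by decide) (by decide) (by decide) hk3 hk0 hk1
  · exact case2211' hy hblue hy' 0 3 1 2 (by decide) (by decide) (by decide) (by decide)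
      (by decide) (by decide) hk0 hk3 hk1 hk2
  · exact case2211' hy hblue hy' 0 2 1 3 (by decide) (by decide) (by decide) (by decide)
      (by decide) (by decide) hk0 hk2 hk1 hk3
  · exact case321 hy hblue hy' 2 0 1 (by decide) (by decide) (by decide) hk2 hk0 hk1
  · exact case222' hy hblue hy' 0 1 3 (by decide) (by decide) (by decide) hk0 hk1 hk3
  · exact case2211' hy hblue hy' 0 1 2 3 (by decide) (by decide) (by decide) (by decide)
      (by decide) (by decide) hk0 hk1 hk2 hk3
  · exact case222' hy hblue hy' 0 1 2 (by decide) (by decide) (by decide) hk0 hk1 hk2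
  · exact case321 hy hblue hy' 1 0 3 (by decide) (by decide) (by decide) hk1 hk0 hk3
  · exact case321 hy hblue hy' 1 0 2 (by decide) (by decide) (by decide) hk1 hk0 hk2
  · exact case33 hy hblue hy' 0 3 (by decide) hk0 hk3
  · exact case321 hy hblue hy' 0 3 2 (by decide) (by decide) (by decide) hk0 hk3 hk2
  · exact case321 hy hblue hy' 0 2 3 (by decide) (by decide) (by decide) hk0 hk2 hk3
  · exact case33 hy hblue hy' 0 2 (by decide) hk0 hk2
  · exact case321 hy hblue hy' 0 3 1 (by decide) (by decide) (by decide) hk0 hk3 hk1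
  · exact case3111 hy hblue hy' 0 1 2 3 (by decide) (by decide) (by decide) (by decide)
      (by decide) (by decide) hk0 hk1 hk2 hk3
  · exact case321 hy hblue hy' 0 2 1 (by decide) (by decide) (by decide) hk0 hk2 hk1
  · exact case321 hy hblue hy' 0 1 3 (by decide) (by decide) (by decide) hk0 hk1 hk3
  · exact case321 hy hblue hy' 0 1 2 (by decide) (by decide) (by decide) hk0 hk1 hk2
  · exact case33 hy hblue hy' 0 1 (by decide) hk0 hk1
end Cases

section Matching
def ends (l : List (V × V)) : List V := l.flatMap (fun p => [p.1, p.2])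

def isM (R : SimpleGraph V) (l : List (V × V)) : Prop :=
  (∀ p ∈ l, R.Adj p.1 p.2) ∧ (ends l).Nodup

lemma ends_length (l : List (V × V)) : (ends l).length = 2 * l.length := by
  induction l with
  | nil => simp [ends]
  | cons p t ih => simp [ends] at ih ⊢; omega

lemma stripe_of_4 {R : SimpleGraph V} {p0 p1 p2 p3 : V × V}
    (h : isM R [p0, p1, p2, p3]) : Contains R (stripe 4) := by
  obtain ⟨hadj, hnd⟩ := h
  have h0 : R.Adj p0.1 p0.2 := hadj p0 (by simp)
  have h1 : R.Adj p1.1 p1.2 := hadj p1 (by simp)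
  have h2 : R.Adj p2.1 p2.2 := hadj p2 (by simp)
  have h3 : R.Adj p3.1 p3.2 := hadj p3 (by simp)
  simp only [ends, List.flatMap_cons, List.flatMap_nil, List.append_nil, List.cons_append,
    List.nil_append, List.nodup_cons, List.mem_cons, List.not_mem_nil, List.mem_singleton,
    or_false, not_or, List.nodup_nil, and_true] at hnd
  refine ⟨fun x => (fun q : V × V => (fun j : Fin 2 => match j with | 0 => q.1 | 1 => q.2) x.2)
    ((fun i : Fin 4 => match i with | 0 => p0 | 1 => p1 | 2 => p2 | 3 => p3) x.1), ?_, ?_⟩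
  · intro a b hab
    obtain ⟨a1, a2⟩ := a
    obtain ⟨b1, b2⟩ := b
    fin_cases a1 <;> fin_cases a2 <;> fin_cases b1 <;> fin_cases b2 <;> simp_all
  · intro a b hab
    obtain ⟨ha, hb⟩ := hab
    obtain ⟨a1, a2⟩ := a
    obtain ⟨b1, b2⟩ := b
    simp only at ha hb
    subst ha
    fin_cases a1 <;> fin_cases a2 <;> fin_cases b2 <;> simp_all <;>
      first | exact h0.symm | exact h1.symm | exact h2.symm | exact h3.symm

lemma mle3 {R : SimpleGraph V} {l : List (V × V)} (hM : isM R l)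
    (hR : ¬ Contains R (stripe 4)) : l.length ≤ 3 := by
  by_contra hlen
  push_neg at hlen
  obtain ⟨hadj, hnd⟩ := hM
  match l, hlen with
  | p0 :: p1 :: p2 :: p3 :: rest, _ =>
    apply hR
    apply stripe_of_4 (p0 := p0) (p1 := p1) (p2 := p2) (p3 := p3)
    constructor
    · intro p hp
      apply hadj
      simp only [List.mem_cons, List.not_mem_nil, or_false] at hp
      rcases hp with rfl | rfl | rfl | rfl <;> simp
    · have heq : ends (p0 :: p1 :: p2 :: p3 :: rest) = ends [p0,p1,p2,p3] ++ ends rest := by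
        simp [ends]
      rw [heq] at hnd
      exact hnd.sublist (List.sublist_append_left _ _)

end Matching
lemma fin2cases : ∀ x : Fin 2, x ≠ 0 → x = 1 := by decide

lemma main : ∀ c : Sym2 (Fin 4 × Fin 3) → Fin 2,
    Contains (colorClass (multiK 4 3) c 0) (stripe 4) ∨
    Contains (colorClass (multiK 4 3) c 1) (cycleGraph 7) := by
  intro c
  classical
  set R := colorClass (multiK 4 3) c 0 with hRdef
  set B := colorClass (multiK 4 3) c 1 with hBdef
  by_cases hR : Contains R (stripe 4)
  · exact Or.inl hR
  right
  let P : ℕ → Prop := fun k => ∃ l : List (V × V), isM R l ∧ l.length = k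
  have hP0 : P 0 := ⟨[], ⟨by simp, by simp [ends]⟩, rfl⟩
  have hPle : ∀ k, P k → k ≤ 3 := by
    rintro k ⟨l, hMl, rfl⟩
    exact mle3 hMl hR
  obtain ⟨l, hMl, hlen⟩ : P (Nat.findGreatest P 3) := Nat.findGreatest_spec (Nat.zero_le 3) hP0
  have hmaxl : ∀ l' : List (V × V), isM R l' → l'.length ≤ l.length := by
    intro l' hMl'
    by_contra hgt
    push_neg at hgt
    exact Nat.findGreatest_is_greatest (hlen ▸ hgt) (hPle _ ⟨l', hMl', rfl⟩) ⟨l', hMl', rfl⟩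
  have hl3 : l.length ≤ 3 := mle3 hMl hR
  obtain ⟨U, hU⟩ : ∃ U : Finset V, ∀ v : V, v ∈ U ↔ v ∉ ends l :=
    ⟨Finset.univ.filter (fun v => v ∉ ends l), fun v => by simp⟩
  have hadjRB : ∀ u v : V, u.1 ≠ v.1 → ¬ R.Adj u v → B.Adj u v := by
    intro u v h hr
    have hc : c s(u,v) ≠ 0 := fun h0 => hr ⟨h, h0⟩
    exact ⟨h, fin2cases _ hc⟩
  have hUblue : ∀ u ∈ U, ∀ v ∈ U, u.1 ≠ v.1 → B.Adj u v := by
    intro u hu v hv h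
    apply hadjRB u v h
    intro hr
    have hM' : isM R ((u,v) :: l) := by
      constructor
      · intro p hp
        rcases List.mem_cons.mp hp with rfl | hp
        · exact hr
        · exact hMl.1 p hp
      · have : ends ((u,v) :: l) = u :: v :: ends l := by simp [ends]
        rw [this]
        refine List.nodup_cons.mpr ⟨?_, List.nodup_cons.mpr ⟨(hU v).mp hv, hMl.2⟩⟩
        simp only [List.mem_cons, not_or]
        exact ⟨ne_of_parts' h, (hU u).mp hu⟩
    have := hmaxl _ hM'
    simp at this
  have hUcard : U.card + 2 * l.length = 12 := by
    have hUeq : U = Finset.univ.filter (fun v : V => ¬ v ∈ ends l) := by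
      ext v; simp [hU v]
    have h1 : Finset.univ.filter (fun v : V => v ∈ ends l) = (ends l).toFinset := by
      ext v; simp
    have h2 := Finset.card_filter_add_card_filter_not
      (s := (Finset.univ : Finset V)) (p := fun v : V => v ∈ ends l)
    rw [h1, List.toFinset_card_of_nodup hMl.2, ends_length] at h2
    have h3 : (Finset.univ : Finset V).card = 12 := by decide
    rw [h3] at h2
    rw [hUeq]
    omega
  by_cases h3 : l.length = 3
  · -- maximum matching of size 3
    rcases l with _ | ⟨q0, l⟩; · simp at h3
    rcases l with _ | ⟨qm, l⟩; · simp at h3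
    rcases l with _ | ⟨q2, l⟩; · simp at h3
    rcases l with _ | ⟨q3, l⟩
    swap
    · simp at h3
    · have hUcard6 : U.card = 6 := by omega
      have hq0 : R.Adj q0.1 q0.2 := hMl.1 q0 (by simp)
      have hends : ∀ v : V, v ∈ ends [q0,qm,q2] ↔
          v = q0.1 ∨ v = q0.2 ∨ v = qm.1 ∨ v = qm.2 ∨ v = q2.1 ∨ v = q2.2 := by
        intro v; simp [ends]
      have haug : ∀ u ∈ U, ∀ v ∈ U, u ≠ v → R.Adj u q0.1 → R.Adj v q0.2 → False := by
        intro u hu v hv huv h1 h2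
        have hu' := (hU u).mp hu
        have hv' := (hU v).mp hv
        rw [hends] at hu' hv'
        push_neg at hu' hv'
        obtain ⟨hu1, hu2, hu3, hu4, hu5, hu6⟩ := hu'
        obtain ⟨hv1, hv2, hv3, hv4, hv5, hv6⟩ := hv'
        have hnd := hMl.2
        simp only [ends, List.flatMap_cons, List.flatMap_nil, List.append_nil, List.cons_append,
          List.nil_append, List.nodup_cons, List.mem_cons, List.not_mem_nil, List.mem_singleton,
          or_false, not_or, List.nodup_nil, and_true] at hnd
        obtain ⟨⟨m1,m2,m3,m4,m5⟩,⟨m6,m7,m8,m9⟩,⟨m10,m11,m12⟩,⟨m13,m14⟩,m15⟩ := hnd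
        apply hR
        apply stripe_of_4 (p0 := (u, q0.1)) (p1 := (v, q0.2)) (p2 := qm) (p3 := q2)
        refine ⟨?_, ?_⟩
        · intro p hp
          simp only [List.mem_cons, List.not_mem_nil, or_false] at hp
          rcases hp with rfl | rfl | rfl | rfl
          · exact h1
          · exact h2
          · exact hMl.1 _ (by simp)
          · exact hMl.1 _ (by simp)
        · simp only [ends, List.flatMap_cons, List.flatMap_nil, List.append_nil, List.cons_append,
            List.nil_append, List.nodup_cons, List.mem_cons, List.not_mem_nil, List.mem_singleton,
            or_false, not_or, List.nodup_nil, and_true]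
          exact ⟨⟨hu1, huv, hu2, hu3, hu4, hu5, hu6⟩,
            ⟨fun h => hv1 h.symm, m1, m2, m3, m4, m5⟩,
            ⟨hv2, hv3, hv4, hv5, hv6⟩, ⟨m6, m7, m8, m9⟩, ⟨m10, m11, m12⟩, ⟨m13, m14⟩, m15⟩
      have hq01U : q0.1 ∉ U := fun h => (hU q0.1).mp h (by rw [hends]; tauto)
      have hq02U : q0.2 ∉ U := fun h => (hU q0.2).mp h (by rw [hends]; tauto)
      by_cases hBf : ∃ v ∈ U, R.Adj v q0.2
      · obtain ⟨v0, hv0U, hv0⟩ := hBf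
        apply core (S := U) (y := q0.1) (w := v0) hq01U hUcard6 (fun u hu v hv h => hUblue u hu v hv h)
        intro u hu hune huw
        apply hadjRB u q0.1 hune
        intro hr
        exact haug u hu v0 hv0U huw hr hv0
      · push_neg at hBf
        apply core (S := U) (y := q0.2) (w := q0.2) hq02U hUcard6 (fun u hu v hv h => hUblue u hu v hv h)
        intro u hu hune huw
        apply hadjRB u q0.2 hune
        intro hr
        exact hBf u hu hr
  · -- matching of size ≤ 2
    have hle2 : l.length ≤ 2 := by omega
    have hU7 : 7 ≤ U.card := by omega
    obtain ⟨T, hTU, hT7⟩ := Finset.exists_subset_card_eq hU7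
    obtain ⟨y, hyT⟩ := Finset.card_pos.mp (by rw [hT7]; norm_num)
    have hS6 : (T.erase y).card = 6 := by rw [Finset.card_erase_of_mem hyT, hT7]
    apply core (S := T.erase y) (y := y) (w := y) (Finset.notMem_erase y T) hS6
    · intro u hu v hv h
      exact hUblue u (hTU (Finset.mem_of_mem_erase hu)) v (hTU (Finset.mem_of_mem_erase hv)) h
    · intro u hu hune huw
      exact hUblue u (hTU (Finset.mem_of_mem_erase hu)) y (hTU hyT) hune

def cex : Sym2 (Fin 4 × Fin 2) → Fin 2 :=
  Sym2.lift ⟨fun u v => if u.1 = 0 ∨ v.1 = 0 then 0 else 1, fun u v => by simp [or_comm]⟩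

lemma cex_no_stripe : ¬ Contains (colorClass (multiK 4 2) cex 0) (stripe 4) := by
  rintro ⟨f, hinj, hadj⟩
  have hcond : ∀ i : Fin 4, (f (i,0)).1 = 0 ∨ (f (i,1)).1 = 0 := by
    intro i
    have h := hadj (show (stripe 4).Adj (i,0) (i,1) from ⟨rfl, by simp⟩)
    have hc := h.2
    simp only [cex, Sym2.lift_mk] at hc
    by_contra hcon
    rw [if_neg hcon] at hc
    exact absurd hc (by decide)
  classical
  let h : Fin 4 → Fin 4 × Fin 2 := fun i => if (f (i,0)).1 = 0 then f (i,0) else f (i,1)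
  have hh1 : ∀ i, (h i).1 = 0 := by
    intro i
    simp only [h]
    split_ifs with hc
    · exact hc
    · exact (hcond i).resolve_left hc
  have hhinj : Function.Injective h := by
    intro i j he
    simp only [h] at he
    split_ifs at he <;>
      exact congrArg (fun x : Fin 4 × Fin 2 => x.1) (hinj he)
  have hsub : Finset.univ.image h ⊆ Finset.univ.filter (fun v : Fin 4 × Fin 2 => v.1 = 0) := by
    intro v hv
    simp only [Finset.mem_image] at hv
    obtain ⟨i, -, rfl⟩ := hv
    simp [hh1 i]
  have hle := Finset.card_le_card hsub
  rw [Finset.card_image_of_injective _ hhinj] at hle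
  have e1 : (Finset.univ : Finset (Fin 4)).card = 4 := by decide
  have e2 : (Finset.univ.filter (fun v : Fin 4 × Fin 2 => v.1 = 0)).card = 2 := by decide
  omega

lemma cex_no_c7 : ¬ Contains (colorClass (multiK 4 2) cex 1) (cycleGraph 7) := by
  rintro ⟨f, hinj, hadj⟩
  have hAdjC : ∀ i : Fin 7, (cycleGraph 7).Adj i (i + 1) := by decide
  have hpart : ∀ i : Fin 7, (f i).1 ≠ 0 := by
    intro i h0
    have hc := (hadj (hAdjC i)).2
    simp only [cex, Sym2.lift_mk] at hc
    rw [if_pos (Or.inl h0)] at hc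
    exact absurd hc (by decide)
  have hsub : Finset.univ.image f ⊆ Finset.univ.filter (fun v : Fin 4 × Fin 2 => v.1 ≠ 0) := by
    intro v hv
    simp only [Finset.mem_image] at hv
    obtain ⟨i, -, rfl⟩ := hv
    simp [hpart i]
  have hle := Finset.card_le_card hsub
  rw [Finset.card_image_of_injective _ hinj] at hle
  have e1 : (Finset.univ : Finset (Fin 7)).card = 7 := by decide
  have e2 : (Finset.univ.filter (fun v : Fin 4 × Fin 2 => v.1 ≠ 0)).card = 6 := by decide
  omega

lemma not1 : ¬ (∀ c : Sym2 (Fin 4 × Fin 1) → Fin 2,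
    Contains (colorClass (multiK 4 1) c 0) (stripe 4) ∨
    Contains (colorClass (multiK 4 1) c 1) (cycleGraph 7)) := by
  intro h
  rcases h (fun _ => 0) with ⟨f, hinj, -⟩ | ⟨f, hinj, -⟩
  · have := Fintype.card_le_of_injective f hinj
    simp [Fintype.card_prod] at this
  · have := Fintype.card_le_of_injective f hinj
    simp [Fintype.card_prod] at this

theorem stmt14 :
    ArrowsC7 4 3 4 ∧
    (∃ c : Sym2 (Fin 4 × Fin 2) → Fin 2,
      ¬ Contains (colorClass (multiK 4 2) c 0) (stripe 4) ∧
      ¬ Contains (colorClass (multiK 4 2) c 1) (cycleGraph 7)) ∧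
    IsLeast {t : ℕ | 0 < t ∧ ArrowsC7 4 t 4} 3 := by
  have hmain : ArrowsC7 4 3 4 := main
  refine ⟨hmain, ⟨cex, cex_no_stripe, cex_no_c7⟩, ⟨by norm_num, hmain⟩, ?_⟩
  intro t ht
  obtain ⟨ht0, htA⟩ := ht
  by_contra hlt
  push_neg at hlt
  interval_cases t
  · exact not1 htA
  · rcases htA cex with h | h
    · exact cex_no_stripe h
    · exact cex_no_c7 h
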